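/- If a Jensen convex function g : U → ℝ on an open convex set U ⊆ ℝ satisfies g ≤ 0 on U, then g is convex (and hence continuous) on U. -/

import Mathlib

open Filter Topology

lemma mem3_aux {U : Set ℝ} (hUconv : Convex ℝ U) {a b c α β γ : ℝ}
    (ha : a ∈ U) (hb : b ∈ U) (hc : c ∈ U)
    (hα : 0 ≤ α) (hβ : 0 ≤ β) (hγ : 0 ≤ γ) (hsum : α + β + γ = 1) :
    α * a + β * b + γ * c ∈ U := by
  have := hUconv.sum_mem (t := (Finset.univ : Finset (Fin 3)))
    (w := ![α, β, γ]) (z := ![a, b, c])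
    (by intro i _; fin_cases i <;> simpa)
    (by simp [Fin.sum_univ_three, hsum])
    (by intro i _; fin_cases i <;> simpa)
  simpa [Fin.sum_univ_three, smul_eq_mul] using this

lemma dyadic3 {U : Set ℝ} (hUconv : Convex ℝ U) (g : ℝ → ℝ)
    (hg : ∀ u ∈ U, ∀ v ∈ U, g ((u + v) / 2) ≤ (g u + g v) / 2) :
    ∀ n : ℕ, ∀ i j k : ℕ, i + j + k = 2 ^ n → ∀ a ∈ U, ∀ b ∈ U, ∀ c ∈ U,
      g ((i * a + j * b + k * c) / 2 ^ n) ≤ (i * g a + j * g b + k * g c) / 2 ^ n := by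
  intro n
  induction n with
  | zero =>
    intro i j k hijk a ha b hb c hc
    have hcase : (i = 1 ∧ j = 0 ∧ k = 0) ∨ (i = 0 ∧ j = 1 ∧ k = 0) ∨ (i = 0 ∧ j = 0 ∧ k = 1) := by omega
    rcases hcase with ⟨h1,h2,h3⟩|⟨h1,h2,h3⟩|⟨h1,h2,h3⟩ <;> subst h1 <;> subst h2 <;> subst h3 <;> simp
  | succ n ih =>
    intro i j k hijk a ha b hb c hc
    set i1 := min i (2 ^ n) with hi1
    set j1 := min j (2 ^ n - i1) with hj1
    set k1 := 2 ^ n - i1 - j1 with hk1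
    have hpow : 2 ^ (n + 1) = 2 ^ n + 2 ^ n := by ring
    have h1 : i1 + j1 + k1 = 2 ^ n := by omega
    have hile : i1 ≤ i := by omega
    have hjle : j1 ≤ j := by omega
    have hkle : k1 ≤ k := by omega
    have h2 : (i - i1) + (j - j1) + (k - k1) = 2 ^ n := by omega
    have hmem1 : ((i1 : ℝ) * a + j1 * b + k1 * c) / 2 ^ n ∈ U := by
      have : ((i1 : ℝ) * a + j1 * b + k1 * c) / 2 ^ n
          = ((i1 : ℝ)/2^n) * a + ((j1:ℝ)/2^n) * b + ((k1:ℝ)/2^n) * c := by ring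
      rw [this]
      refine mem3_aux hUconv ha hb hc (by positivity) (by positivity) (by positivity) ?_
      have : (i1 : ℝ) + j1 + k1 = 2 ^ n := by exact_mod_cast congrArg (Nat.cast : ℕ → ℝ) h1
      field_simp
      linarith
    have hmem2 : (((i - i1 : ℕ) : ℝ) * a + ((j - j1 : ℕ) : ℝ) * b + ((k - k1 : ℕ) : ℝ) * c) / 2 ^ n ∈ U := by
      have : (((i - i1 : ℕ) : ℝ) * a + ((j - j1 : ℕ) : ℝ) * b + ((k - k1 : ℕ) : ℝ) * c) / 2 ^ n
          = (((i - i1 : ℕ) : ℝ)/2^n) * a + (((j - j1 : ℕ):ℝ)/2^n) * b + (((k - k1 : ℕ):ℝ)/2^n) * c := by ring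
      rw [this]
      refine mem3_aux hUconv ha hb hc (by positivity) (by positivity) (by positivity) ?_
      have h2' : ((i - i1 : ℕ) : ℝ) + ((j - j1 : ℕ) : ℝ) + ((k - k1 : ℕ) : ℝ) = 2 ^ n := by
        exact_mod_cast congrArg (Nat.cast : ℕ → ℝ) h2
      push_cast [Nat.cast_sub hile, Nat.cast_sub hjle, Nat.cast_sub hkle] at h2' ⊢
      field_simp
      linarith
    have hmid := hg _ hmem1 _ hmem2
    have e1 : (((i1 : ℝ) * a + j1 * b + k1 * c) / 2 ^ n
        + ((((i - i1 : ℕ) : ℝ) * a + ((j - j1 : ℕ) : ℝ) * b + ((k - k1 : ℕ) : ℝ) * c) / 2 ^ n)) / 2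
        = ((i : ℝ) * a + j * b + k * c) / 2 ^ (n + 1) := by
      have ei : ((i - i1 : ℕ) : ℝ) = (i : ℝ) - i1 := by
        rw [Nat.cast_sub hile]
      have ej : ((j - j1 : ℕ) : ℝ) = (j : ℝ) - j1 := by rw [Nat.cast_sub hjle]
      have ek : ((k - k1 : ℕ) : ℝ) = (k : ℝ) - k1 := by rw [Nat.cast_sub hkle]
      rw [ei, ej, ek]; ring
    have hA := ih i1 j1 k1 h1 a ha b hb c hc
    have hB := ih (i - i1) (j - j1) (k - k1) h2 a ha b hb c hc
    have ei : ((i - i1 : ℕ) : ℝ) = (i : ℝ) - i1 := by rw [Nat.cast_sub hile]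
    have ej : ((j - j1 : ℕ) : ℝ) = (j : ℝ) - j1 := by rw [Nat.cast_sub hjle]
    have ek : ((k - k1 : ℕ) : ℝ) = (k : ℝ) - k1 := by rw [Nat.cast_sub hkle]
    calc g (((i : ℝ) * a + j * b + k * c) / 2 ^ (n + 1))
        = g ((((i1 : ℝ) * a + j1 * b + k1 * c) / 2 ^ n
            + (((i - i1 : ℕ) : ℝ) * a + ((j - j1 : ℕ) : ℝ) * b + ((k - k1 : ℕ) : ℝ) * c) / 2 ^ n) / 2) :=
          (congrArg g e1).symm
      _ ≤ (g (((i1 : ℝ) * a + j1 * b + k1 * c) / 2 ^ n)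
            + g ((((i - i1 : ℕ) : ℝ) * a + ((j - j1 : ℕ) : ℝ) * b + ((k - k1 : ℕ) : ℝ) * c) / 2 ^ n)) / 2 := hmid
      _ ≤ (((i1 : ℝ) * g a + j1 * g b + k1 * g c) / 2 ^ n
            + (((i - i1 : ℕ) : ℝ) * g a + ((j - j1 : ℕ) : ℝ) * g b + ((k - k1 : ℕ) : ℝ) * g c) / 2 ^ n) / 2 := by
          linarith
      _ = ((i : ℝ) * g a + j * g b + k * g c) / 2 ^ (n + 1) := by
          rw [ei, ej, ek]; ring

theorem stmt_4 (U : Set ℝ) (hUopen : IsOpen U) (hUconv : Convex ℝ U)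
    (g : ℝ → ℝ) (hg : ∀ u ∈ U, ∀ v ∈ U, g ((u + v) / 2) ≤ (g u + g v) / 2)
    (hle : ∀ u ∈ U, g u ≤ 0) :
    ConvexOn ℝ U g ∧ ContinuousOn g U := by
  have hconv : ConvexOn ℝ U g := by
    refine ⟨hUconv, ?_⟩
    intro x hx y hy A B hA hB hAB
    simp only [smul_eq_mul]
    rcases eq_or_lt_of_le hA with hA0 | hA0
    · have hB1 : B = 1 := by linarith
      simp [← hA0, hB1]
    rcases eq_or_lt_of_le hB with hB0 | hB0
    · have hA1 : A = 1 := by linarith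
      simp [← hB0, hA1]
    have hA1 : A < 1 := by linarith
    -- dyadic approximation
    set z := A * x + B * y with hz
    have key : ∀ n : ℕ, g z ≤ (⌊A * 2 ^ n⌋₊ : ℝ) / 2 ^ n * g x
        + ((2 ^ n - 1 - ⌊A * 2 ^ n⌋₊ : ℕ) : ℝ) / 2 ^ n * g y := by
      intro n
      set i := ⌊A * 2 ^ n⌋₊ with hi
      have hposn : (0:ℝ) < 2 ^ n := by positivity
      have hfl : (i : ℝ) ≤ A * 2 ^ n := Nat.floor_le (by positivity)
      have hfl2 : A * 2 ^ n < i + 1 := Nat.lt_floor_add_one _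
      have hilt : i < 2 ^ n := by
        rw [hi, Nat.floor_lt (by positivity)]
        push_cast
        nlinarith
      set j := 2 ^ n - 1 - i with hj
      have hijk : i + j + 1 = 2 ^ n := by omega
      have hjcast : (j : ℝ) = 2 ^ n - 1 - i := by
        have h' : j + 1 + i = 2 ^ n := by omega
        have := congrArg (Nat.cast : ℕ → ℝ) h'
        push_cast at this
        linarith
      -- the auxiliary point
      set α : ℝ := A * 2 ^ n - i with hα
      have hα0 : 0 ≤ α := by linarith
      have hα1 : α ≤ 1 := by linarith
      set c : ℝ := α * x + (1 - α) * y with hc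
      have hcU : c ∈ U := by
        have := hUconv hx hy hα0 (by linarith) (by linarith : α + (1 - α) = 1)
        simpa [smul_eq_mul] using this
      have hzc : ((i : ℝ) * x + (j : ℝ) * y + 1 * c) / 2 ^ n = z := by
        rw [hc, hjcast, hz]
        have hB' : B = 1 - A := by linarith
        rw [hB', hα]
        field_simp
        ring
      have hd := dyadic3 hUconv g hg n i j 1 (by omega) x hx y hy c hcU
      push_cast at hd
      rw [hzc] at hd
      have hgc : g c ≤ 0 := hle c hcU
      calc g z ≤ ((i : ℝ) * g x + (j : ℝ) * g y + 1 * g c) / 2 ^ n := by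
            simpa using hd
        _ ≤ ((i : ℝ) * g x + (j : ℝ) * g y) / 2 ^ n := by
            gcongr ?_ / _
            linarith
        _ = (i : ℝ) / 2 ^ n * g x + (j : ℝ) / 2 ^ n * g y := by ring
    -- pass to the limit
    have hp : Tendsto (fun n : ℕ => (⌊A * 2 ^ n⌋₊ : ℝ) / 2 ^ n) atTop (𝓝 A) := by
      have hlow : ∀ n : ℕ, A - (1/2 : ℝ) ^ n ≤ (⌊A * 2 ^ n⌋₊ : ℝ) / 2 ^ n := by
        intro n
        have hposn : (0:ℝ) < 2 ^ n := by positivity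
        have hfl2 : A * 2 ^ n < ⌊A * 2 ^ n⌋₊ + 1 := Nat.lt_floor_add_one _
        have h2 : (1/2 : ℝ) ^ n * 2 ^ n = 1 := by
          rw [div_pow, one_pow, div_mul_cancel₀]
          positivity
        rw [le_div_iff₀ hposn]
        nlinarith
      have hhigh : ∀ n : ℕ, (⌊A * 2 ^ n⌋₊ : ℝ) / 2 ^ n ≤ A := by
        intro n
        have hposn : (0:ℝ) < 2 ^ n := by positivity
        have hfl : (⌊A * 2 ^ n⌋₊ : ℝ) ≤ A * 2 ^ n := Nat.floor_le (by positivity)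
        rw [div_le_iff₀ hposn]
        linarith
      have h1 : Tendsto (fun n : ℕ => A - (1/2 : ℝ) ^ n) atTop (𝓝 A) := by
        have := tendsto_pow_atTop_nhds_zero_of_lt_one (by norm_num : (0:ℝ) ≤ 1/2)
          (by norm_num : (1/2 : ℝ) < 1)
        simpa using tendsto_const_nhds.sub this
      exact tendsto_of_tendsto_of_tendsto_of_le_of_le h1 tendsto_const_nhds hlow hhigh
    have hq : Tendsto (fun n : ℕ => ((2 ^ n - 1 - ⌊A * 2 ^ n⌋₊ : ℕ) : ℝ) / 2 ^ n) atTop (𝓝 B) := by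
      have heq : ∀ n : ℕ, ((2 ^ n - 1 - ⌊A * 2 ^ n⌋₊ : ℕ) : ℝ) / 2 ^ n
          = 1 - (1/2 : ℝ) ^ n - (⌊A * 2 ^ n⌋₊ : ℝ) / 2 ^ n := by
        intro n
        have hposn : (0:ℝ) < 2 ^ n := by positivity
        have hilt : ⌊A * 2 ^ n⌋₊ < 2 ^ n := by
          rw [Nat.floor_lt (by positivity)]
          push_cast
          nlinarith
        have h' : (2 ^ n - 1 - ⌊A * 2 ^ n⌋₊) + 1 + ⌊A * 2 ^ n⌋₊ = 2 ^ n := by omega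
        have := congrArg (Nat.cast : ℕ → ℝ) h'
        push_cast at this
        have h2 : (1/2 : ℝ) ^ n = (2 ^ n)⁻¹ := by rw [one_div, inv_pow]
        field_simp
        linarith [show (2:ℝ) ^ n * (1/2 : ℝ) ^ n = 1 by rw [h2, mul_inv_cancel₀ hposn.ne']]
      simp only [heq]
      have h0 : Tendsto (fun n : ℕ => ((1:ℝ)/2) ^ n) atTop (𝓝 0) :=
        tendsto_pow_atTop_nhds_zero_of_lt_one (by norm_num) (by norm_num)
      have : Tendsto (fun n : ℕ => 1 - (1/2 : ℝ) ^ n - (⌊A * 2 ^ n⌋₊ : ℝ) / 2 ^ n)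
          atTop (𝓝 (1 - 0 - A)) := (tendsto_const_nhds.sub h0).sub hp
      have hB' : B = 1 - 0 - A := by linarith
      rw [hB']
      exact this
    have hlim : Tendsto (fun n : ℕ => (⌊A * 2 ^ n⌋₊ : ℝ) / 2 ^ n * g x
        + ((2 ^ n - 1 - ⌊A * 2 ^ n⌋₊ : ℕ) : ℝ) / 2 ^ n * g y) atTop (𝓝 (A * g x + B * g y)) :=
      (hp.mul tendsto_const_nhds).add (hq.mul tendsto_const_nhds)
    exact ge_of_tendsto' hlim key
  exact ⟨hconv, hconv.continuousOn hUopen⟩
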